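/- Let I = (a,b) ⊂ ℝ be a bounded open interval and M > 0. Let p_j, p : I → E be measurable with ‖p_j(τ)‖ ≤ M and ‖p(τ)‖ ≤ M for a.e. τ ∈ I. Assume weak-* convergence: for every integrable φ : I → E, ∫_I ⟪φ(τ), p_j(τ)⟫ dτ → ∫_I ⟪φ(τ), p(τ)⟫ dτ as j → ∞. Let C : I → Set E assign to a.e. τ a nonempty closed convex set contained in the closed ball of radius M centered at 0, such that for every ξ ∈ E the function τ ↦ sup_{q ∈ C(τ)} ⟪ξ, q⟫ is measurable, and such that dist(p_j(τ), C(τ)) → 0 as j → ∞ for a.e. τ ∈ I. Then p(τ) ∈ C(τ) for a.e. τ ∈ I. -/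

import Mathlib

open MeasureTheory Metric Filter Topology

private lemma trunc_eq {x B : ℝ} (h : |x| ≤ B) : max (min x B) (-B) = x := by
  rcases abs_le.mp h with ⟨h1, h2⟩
  rw [min_eq_left h2, max_eq_left h1]

private lemma aux_perxi (d : ℕ)
    (a b : ℝ) (M : ℝ) (hM : 0 < M)
    (p : ℕ → ℝ → EuclideanSpace ℝ (Fin d)) (q : ℝ → EuclideanSpace ℝ (Fin d))
    (hpmeas : ∀ j, Measurable (p j)) (hqmeas : Measurable q)
    (hpbd : ∀ j, ∀ᵐ τ ∂(volume.restrict (Set.Ioo a b)), ‖p j τ‖ ≤ M)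
    (hqbd : ∀ᵐ τ ∂(volume.restrict (Set.Ioo a b)), ‖q τ‖ ≤ M)
    (hweak : ∀ φ : ℝ → EuclideanSpace ℝ (Fin d),
      Integrable φ (volume.restrict (Set.Ioo a b)) →
      Tendsto (fun j => ∫ τ in Set.Ioo a b, (inner ℝ (φ τ) (p j τ) : ℝ)) atTop
        (𝓝 (∫ τ in Set.Ioo a b, (inner ℝ (φ τ) (q τ) : ℝ))))
    (C : ℝ → Set (EuclideanSpace ℝ (Fin d)))
    (hC : ∀ᵐ τ ∂(volume.restrict (Set.Ioo a b)),
      (C τ).Nonempty ∧ IsClosed (C τ) ∧ Convex ℝ (C τ) ∧ C τ ⊆ Metric.closedBall 0 M)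
    (hdist : ∀ᵐ τ ∂(volume.restrict (Set.Ioo a b)),
      Tendsto (fun j => Metric.infDist (p j τ) (C τ)) atTop (𝓝 0))
    (ξ : EuclideanSpace ℝ (Fin d)) :
    ∀ᵐ τ ∂(volume.restrict (Set.Ioo a b)),
      ∃ y ∈ C τ, (inner ℝ ξ (q τ) : ℝ) ≤ inner ℝ ξ y := by
  set μ := volume.restrict (Set.Ioo a b) with hμ
  haveI : IsFiniteMeasure μ := by
    constructor
    rw [hμ, Measure.restrict_apply_univ, Real.volume_Ioo]
    exact ENNReal.ofReal_lt_top
  set B := ‖ξ‖ * M with hBdef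
  have hB0 : 0 ≤ B := mul_nonneg (norm_nonneg _) hM.le
  set u : ℕ → ℝ → ℝ := fun j τ => max (min (inner ℝ ξ (p j τ)) B) (-B) with hu
  have humeas : ∀ j, Measurable (u j) := fun j =>
    ((measurable_const.inner (hpmeas j)).min measurable_const).max measurable_const
  have hub : ∀ j τ, |u j τ| ≤ B := by
    intro j τ
    rw [abs_le]
    refine ⟨le_max_right _ _, max_le (min_le_right _ _) (by linarith)⟩
  set v : ℕ → ℝ → ℝ := fun k τ => ⨆ m : ℕ, u (k + m) τ with hv
  have hbdd : ∀ k τ, BddAbove (Set.range fun m => u (k + m) τ) := by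
    intro k τ
    refine ⟨B, ?_⟩
    rintro x ⟨m, rfl⟩
    exact (abs_le.mp (hub _ _)).2
  have hvmeas : ∀ k, Measurable (v k) := fun k => Measurable.iSup (fun m => humeas _)
  have hvub : ∀ k τ, |v k τ| ≤ B := by
    intro k τ
    rw [abs_le]
    constructor
    · exact le_trans (abs_le.mp (hub (k + 0) τ)).1 (le_ciSup (hbdd k τ) 0)
    · exact ciSup_le fun m => (abs_le.mp (hub _ _)).2
  have hvle : ∀ j k τ, k ≤ j → u j τ ≤ v k τ := by
    intro j k τ h
    have : u j τ = u (k + (j - k)) τ := by rw [Nat.add_sub_cancel' h]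
    rw [this]
    exact le_ciSup (hbdd k τ) (j - k)
  have hvanti : ∀ τ, Antitone fun k => v k τ := by
    intro τ
    refine antitone_nat_of_succ_le fun k => ciSup_le fun m => hvle _ _ _ (by omega)
  set r : ℝ → ℝ := fun τ => ⨅ k, v k τ with hr
  have hrmeas : Measurable r := Measurable.iInf hvmeas
  have hbddb : ∀ τ, BddBelow (Set.range fun k => v k τ) := by
    intro τ
    refine ⟨-B, ?_⟩
    rintro x ⟨k, rfl⟩
    exact (abs_le.mp (hvub k τ)).1
  have hrub : ∀ τ, |r τ| ≤ B := by
    intro τ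
    rw [abs_le]
    constructor
    · exact le_ciInf fun k => (abs_le.mp (hvub k τ)).1
    · exact le_trans (ciInf_le (hbddb τ) 0) (abs_le.mp (hvub 0 τ)).2
  have hvtend : ∀ τ, Tendsto (fun k => v k τ) atTop (𝓝 (r τ)) := fun τ =>
    tendsto_atTop_ciInf (hvanti τ) (hbddb τ)
  have hint : ∀ (f : ℝ → ℝ), Measurable f → (∀ᵐ τ ∂μ, |f τ| ≤ B) → Integrable f μ := by
    intro f hf hbd
    exact ⟨hf.aestronglyMeasurable,
      HasFiniteIntegral.of_bounded (C := B) (hbd.mono fun τ h => by simpa using h)⟩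
  have hpa : ∀ j, (fun τ => (inner ℝ ξ (p j τ) : ℝ)) =ᵐ[μ] u j := by
    intro j
    refine (hpbd j).mono fun τ h => ?_
    refine (trunc_eq ?_).symm
    calc |(inner ℝ ξ (p j τ) : ℝ)| ≤ ‖ξ‖ * ‖p j τ‖ := abs_real_inner_le_norm _ _
      _ ≤ B := by rw [hBdef]; exact mul_le_mul_of_nonneg_left h (norm_nonneg ξ)
  have hqa : ∀ᵐ τ ∂μ, |(inner ℝ ξ (q τ) : ℝ)| ≤ B := by
    refine hqbd.mono fun τ h => ?_
    calc |(inner ℝ ξ (q τ) : ℝ)| ≤ ‖ξ‖ * ‖q τ‖ := abs_real_inner_le_norm _ _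
      _ ≤ B := by rw [hBdef]; exact mul_le_mul_of_nonneg_left h (norm_nonneg ξ)
  have hqint : Integrable (fun τ => (inner ℝ ξ (q τ) : ℝ)) μ :=
    hint _ (measurable_const.inner hqmeas) hqa
  have huint : ∀ j, Integrable (u j) μ := fun j =>
    hint _ (humeas j) (Filter.Eventually.of_forall (hub j))
  have hvint : ∀ k, Integrable (v k) μ := fun k =>
    hint _ (hvmeas k) (Filter.Eventually.of_forall (hvub k))
  have hrint : Integrable r μ := hint _ hrmeas (Filter.Eventually.of_forall hrub)
  -- Step I
  have key : ∀ A : Set ℝ, MeasurableSet A →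
      ∫ τ in A, (inner ℝ ξ (q τ) : ℝ) ∂μ ≤ ∫ τ in A, r τ ∂μ := by
    intro A hA
    have e1 : ∀ (g : ℝ → EuclideanSpace ℝ (Fin d)),
        (fun τ => (inner ℝ ((A.indicator fun _ => ξ) τ) (g τ) : ℝ)) =
          A.indicator (fun τ => (inner ℝ ξ (g τ) : ℝ)) := by
      intro g
      funext τ
      by_cases h : τ ∈ A
      · simp [Set.indicator_of_mem h]
      · simp [Set.indicator_of_notMem h]
    have hw := hweak (A.indicator fun _ => ξ) ((integrable_const ξ).indicator hA)
    rw [hμ] at hw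
    have ep : ∀ j, (∫ τ, (inner ℝ ((A.indicator fun _ => ξ) τ) (p j τ) : ℝ) ∂μ)
        = ∫ τ in A, u j τ ∂μ := by
      intro j
      rw [show (fun τ => (inner ℝ ((A.indicator fun _ => ξ) τ) (p j τ) : ℝ))
          = A.indicator (fun τ => (inner ℝ ξ (p j τ) : ℝ)) from e1 _, integral_indicator hA]
      exact integral_congr_ae (ae_restrict_of_ae (hpa j))
    have eq' : (∫ τ, (inner ℝ ((A.indicator fun _ => ξ) τ) (q τ) : ℝ) ∂μ)
        = ∫ τ in A, (inner ℝ ξ (q τ) : ℝ) ∂μ := by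
      rw [e1, integral_indicator hA]
    have h1 : Tendsto (fun j => ∫ τ in A, u j τ ∂μ) atTop
        (𝓝 (∫ τ in A, (inner ℝ ξ (q τ) : ℝ) ∂μ)) := by
      rw [show (fun j => ∫ τ in A, u j τ ∂μ)
          = fun j => ∫ τ, (inner ℝ ((A.indicator fun _ => ξ) τ) (p j τ) : ℝ) ∂μ from
          funext fun j => (ep j).symm, ← eq']
      exact hw
    have h2 : ∀ k, ∫ τ in A, (inner ℝ ξ (q τ) : ℝ) ∂μ ≤ ∫ τ in A, v k τ ∂μ := by
      intro k
      refine le_of_tendsto h1 (eventually_atTop.mpr ⟨k, fun j hj => ?_⟩)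
      exact integral_mono ((huint j).restrict) ((hvint k).restrict)
        (fun τ => hvle j k τ hj)
    have h3 : Tendsto (fun k => ∫ τ in A, v k τ ∂μ) atTop (𝓝 (∫ τ in A, r τ ∂μ)) := by
      refine tendsto_integral_of_dominated_convergence (fun _ => B)
        (fun k => (hvmeas k).aestronglyMeasurable) (integrable_const B)
        (fun k => Filter.Eventually.of_forall fun τ => by simpa using hvub k τ)
        (Filter.Eventually.of_forall fun τ => hvtend τ)
    exact ge_of_tendsto h3 (Filter.Eventually.of_forall h2)
  -- Step II
  have hqr : ∀ᵐ τ ∂μ, (inner ℝ ξ (q τ) : ℝ) ≤ r τ := by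
    have h0 := ae_nonneg_of_forall_setIntegral_nonneg (hrint.sub hqint)
      (fun s hs _ => by
        simp only [Pi.sub_apply]
        rw [integral_sub hrint.restrict hqint.restrict]
        exact sub_nonneg.mpr (key s hs))
    exact h0.mono fun τ h => by simpa [sub_nonneg] using h
  -- Step III
  have hpball : ∀ᵐ τ ∂μ, ∀ j, ‖p j τ‖ ≤ M := ae_all_iff.mpr hpbd
  filter_upwards [hqr, hC, hdist, hpball] with τ hqrτ hCτ hdτ hpb
  obtain ⟨hne, hcl, hcv, hsub⟩ := hCτ
  have hcp : IsCompact (C τ) :=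
    (isCompact_closedBall (0 : EuclideanSpace ℝ (Fin d)) M).of_isClosed_subset hcl hsub
  obtain ⟨y, hyC, hymax⟩ := hcp.exists_isMaxOn hne
    ((continuous_const.inner continuous_id).continuousOn :
      ContinuousOn (fun z => (inner ℝ ξ z : ℝ)) (C τ))
  refine ⟨y, hyC, hqrτ.trans ?_⟩
  refine le_of_forall_pos_le_add fun ε hε => ?_
  have hε' : (0:ℝ) < ε / (‖ξ‖ + 1) := by positivity
  obtain ⟨k, hk⟩ := eventually_atTop.mp (hdτ.eventually (gt_mem_nhds hε'))
  have hvk : v k τ ≤ (inner ℝ ξ y : ℝ) + ε := by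
    refine ciSup_le fun m => ?_
    obtain ⟨z, hzC, hz⟩ := hcl.exists_infDist_eq_dist hne (p (k + m) τ)
    have hzy : (inner ℝ ξ z : ℝ) ≤ inner ℝ ξ y := hymax hzC
    have habs : (inner ℝ ξ (p (k + m) τ - z) : ℝ) ≤ ‖ξ‖ * ‖p (k + m) τ - z‖ :=
      real_inner_le_norm _ _
    have hdist2 : ‖p (k + m) τ - z‖ = infDist (p (k + m) τ) (C τ) := by
      rw [hz, dist_eq_norm]
    have hsmall : infDist (p (k + m) τ) (C τ) < ε / (‖ξ‖ + 1) := hk (k + m) (by omega)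
    have h1 : (inner ℝ ξ (p (k + m) τ) : ℝ) ≤ inner ℝ ξ y + ε := by
      have hsplit : (inner ℝ ξ (p (k + m) τ) : ℝ)
          = inner ℝ ξ z + inner ℝ ξ (p (k + m) τ - z) := by
        rw [inner_sub_right]; ring
      have hb1 : ‖ξ‖ * ‖p (k + m) τ - z‖ ≤ ‖ξ‖ * (ε / (‖ξ‖ + 1)) := by
        rw [hdist2]
        exact mul_le_mul_of_nonneg_left hsmall.le (norm_nonneg ξ)
      have hb2 : ‖ξ‖ * (ε / (‖ξ‖ + 1)) ≤ ε := by
        rw [mul_div_assoc'] at *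
        rw [div_le_iff₀ (by positivity)]
        nlinarith [norm_nonneg ξ]
      linarith
    have h2 : -B ≤ (inner ℝ ξ y : ℝ) + ε := by
      have h3 : |(inner ℝ ξ y : ℝ)| ≤ ‖ξ‖ * ‖y‖ := abs_real_inner_le_norm _ _
      have hyn : ‖y‖ ≤ M := mem_closedBall_zero_iff.mp (hsub hyC)
      have : ‖ξ‖ * ‖y‖ ≤ B := by
        rw [hBdef]; exact mul_le_mul_of_nonneg_left hyn (norm_nonneg ξ)
      have := (abs_le.mp h3).1
      linarith
    calc u (k + m) τ ≤ max (inner ℝ ξ (p (k + m) τ)) (-B) :=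
          max_le_max (min_le_left _ _) le_rfl
      _ ≤ (inner ℝ ξ y : ℝ) + ε := max_le h1 h2
  exact (ciInf_le (hbddb τ) k).trans hvk

theorem weakstar_limits_preserve_pointwise_convex_constraints
    (d : ℕ) (hd : 1 ≤ d)
    (a b : ℝ) (hab : a < b) (M : ℝ) (hM : 0 < M)
    (p : ℕ → ℝ → EuclideanSpace ℝ (Fin d)) (q : ℝ → EuclideanSpace ℝ (Fin d))
    (hpmeas : ∀ j, Measurable (p j)) (hqmeas : Measurable q)
    (hpbd : ∀ j, ∀ᵐ τ ∂(volume.restrict (Set.Ioo a b)), ‖p j τ‖ ≤ M)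
    (hqbd : ∀ᵐ τ ∂(volume.restrict (Set.Ioo a b)), ‖q τ‖ ≤ M)
    (hweak : ∀ φ : ℝ → EuclideanSpace ℝ (Fin d),
      Integrable φ (volume.restrict (Set.Ioo a b)) →
      Tendsto (fun j => ∫ τ in Set.Ioo a b, (inner ℝ (φ τ) (p j τ) : ℝ)) atTop
        (𝓝 (∫ τ in Set.Ioo a b, (inner ℝ (φ τ) (q τ) : ℝ))))
    (C : ℝ → Set (EuclideanSpace ℝ (Fin d)))
    (hC : ∀ᵐ τ ∂(volume.restrict (Set.Ioo a b)),
      (C τ).Nonempty ∧ IsClosed (C τ) ∧ Convex ℝ (C τ) ∧ C τ ⊆ Metric.closedBall 0 M)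
    (hCmeas : ∀ ξ : EuclideanSpace ℝ (Fin d),
      Measurable (fun τ => ⨆ q' ∈ C τ, (inner ℝ ξ q' : ℝ)))
    (hdist : ∀ᵐ τ ∂(volume.restrict (Set.Ioo a b)),
      Tendsto (fun j => Metric.infDist (p j τ) (C τ)) atTop (𝓝 0)) :
    ∀ᵐ τ ∂(volume.restrict (Set.Ioo a b)), q τ ∈ C τ := by
  obtain ⟨D, hDc, hDd⟩ :=
    TopologicalSpace.exists_countable_dense (EuclideanSpace ℝ (Fin d))
  have hall : ∀ᵐ τ ∂(volume.restrict (Set.Ioo a b)), ∀ ξ ∈ D,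
      ∃ y ∈ C τ, (inner ℝ ξ (q τ) : ℝ) ≤ inner ℝ ξ y :=
    (ae_ball_iff hDc).mpr fun ξ _ =>
      aux_perxi d a b M hM p q hpmeas hqmeas hpbd hqbd hweak C hC hdist ξ
  filter_upwards [hall, hC, hqbd] with τ hsep hCτ hqn
  obtain ⟨hne, hcl, hcv, hsub⟩ := hCτ
  by_contra hqC
  obtain ⟨f, w, hfw, hwx⟩ := geometric_hahn_banach_closed_point hcv hcl hqC
  set ξ₀ := (InnerProductSpace.toDual ℝ (EuclideanSpace ℝ (Fin d))).symm f with hξ₀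
  have hξ₀a : ∀ z, (inner ℝ ξ₀ z : ℝ) = f z := fun z =>
    InnerProductSpace.toDual_symm_apply
  set ε := f (q τ) - w with hεdef
  have hε0 : 0 < ε := sub_pos.mpr hwx
  have hδ0 : 0 < ε / (2 * M + 1) := by positivity
  obtain ⟨ξ, hξball, hξD⟩ := Metric.dense_iff.mp hDd ξ₀ _ hδ0
  obtain ⟨y, hyC, hy⟩ := hsep ξ hξD
  have hyn : ‖y‖ ≤ M := mem_closedBall_zero_iff.mp (hsub hyC)
  have hξn : ‖ξ - ξ₀‖ < ε / (2 * M + 1) := by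
    rw [← dist_eq_norm]; exact mem_ball.mp hξball
  -- bound the perturbation terms
  have hbq : |(inner ℝ (ξ - ξ₀) (q τ) : ℝ)| ≤ (ε / (2 * M + 1)) * M := by
    refine (abs_real_inner_le_norm _ _).trans ?_
    exact mul_le_mul hξn.le hqn (norm_nonneg _) hδ0.le
  have hby : |(inner ℝ (ξ - ξ₀) y : ℝ)| ≤ (ε / (2 * M + 1)) * M := by
    refine (abs_real_inner_le_norm _ _).trans ?_
    exact mul_le_mul hξn.le hyn (norm_nonneg _) hδ0.le
  have e1 : (inner ℝ ξ (q τ) : ℝ) = f (q τ) + inner ℝ (ξ - ξ₀) (q τ) := by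
    rw [← hξ₀a]
    rw [inner_sub_left]
    ring
  have e2 : (inner ℝ ξ y : ℝ) = f y + inner ℝ (ξ - ξ₀) y := by
    rw [← hξ₀a, inner_sub_left]; ring
  have hfy : f y < w := hfw y hyC
  have hkey : 2 * M * (ε / (2 * M + 1)) < ε := by
    rw [← mul_div_assoc, div_lt_iff₀ (by positivity)]
    nlinarith
  have hA := (abs_le.mp hbq).1
  have hB := (abs_le.mp hby).2
  -- hy : inner ℝ ξ (q τ) ≤ inner ℝ ξ y
  rw [e1, e2] at hy
  nlinarith [hy, hfy, hA, hB, hkey, hδ0, hM]
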